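/- arXiv:2301.06573 — 2 statements merged into one kernel-verified Lean document; each statement's English description precedes it below -/
import Mathlib

section
/- Let n ≥ 3 and let Mₙ be the n×n integer matrix with Mᵢᵢ = −2, M_{i,i+1} = M_{i+1,i} = 1 for 1 ≤ i ≤ n−1, M_{1,n} = M_{n,1} = −1, and all other entries 0. Let K₃ = (2, 0, …, 0)ᵀ ∈ ℚⁿ. Then K₃ᵀ Mₙ⁻¹ K₃ = −n, where Mₙ⁻¹ is the inverse of Mₙ over ℚ. -/
open Matrix

/-- The n×n matrix (n ≥ 3) with diagonal entries −2, entries 1 between consecutive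
indices, entries −1 in the corners (1,n) and (n,1), and all other entries 0. -/
def cycMat (n : ℕ) : Matrix (Fin n) (Fin n) ℤ := fun i j =>
  if i = j then -2
  else if (i : ℕ) + 1 = (j : ℕ) ∨ (j : ℕ) + 1 = (i : ℕ) then 1
  else if ((i : ℕ) = 0 ∧ (j : ℕ) = n - 1) ∨ ((j : ℕ) = 0 ∧ (i : ℕ) = n - 1) then -1
  else 0

lemma row0 (n : ℕ) (hn : 3 ≤ n) (w : Fin n → ℚ) :
    ((cycMat n).map (Int.cast : ℤ → ℚ)).mulVec w ⟨0, by omega⟩ =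
      -2 * w ⟨0, by omega⟩ + w ⟨1, by omega⟩ - w ⟨n-1, by omega⟩ := by
  have key : ∀ j : Fin n, ((cycMat n).map (Int.cast : ℤ → ℚ)) ⟨0, by omega⟩ j * w j =
      (if j = (⟨0, by omega⟩ : Fin n) then -2 * w ⟨0, by omega⟩ else 0)
      + (if j = (⟨1, by omega⟩ : Fin n) then w ⟨1, by omega⟩ else 0)
      + (if j = (⟨n-1, by omega⟩ : Fin n) then -(w ⟨n-1, by omega⟩) else 0) := by
    rintro ⟨j, hj⟩
    simp only [cycMat, Matrix.map_apply, Fin.mk.injEq, Fin.ext_iff]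
    split_ifs <;> (try simp only [false_or, or_false, true_and, and_true, false_and, and_false, true_or, or_true, not_true, not_false_iff, not_or] at *) <;> first | omega | (push_cast; subst_vars; ring) | exact absurd rfl (by assumption)
  simp only [Matrix.mulVec, dotProduct, key, Finset.sum_add_distrib,
    Finset.sum_ite_eq', Finset.mem_univ, if_true]
  ring

lemma rowLast (n : ℕ) (hn : 3 ≤ n) (w : Fin n → ℚ) :
    ((cycMat n).map (Int.cast : ℤ → ℚ)).mulVec w ⟨n-1, by omega⟩ =
      w ⟨n-2, by omega⟩ - 2 * w ⟨n-1, by omega⟩ - w ⟨0, by omega⟩ := by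
  have key : ∀ j : Fin n, ((cycMat n).map (Int.cast : ℤ → ℚ)) ⟨n-1, by omega⟩ j * w j =
      (if j = (⟨n-2, by omega⟩ : Fin n) then w ⟨n-2, by omega⟩ else 0)
      + (if j = (⟨n-1, by omega⟩ : Fin n) then -2 * w ⟨n-1, by omega⟩ else 0)
      + (if j = (⟨0, by omega⟩ : Fin n) then -(w ⟨0, by omega⟩) else 0) := by
    rintro ⟨j, hj⟩
    simp only [cycMat, Matrix.map_apply, Fin.mk.injEq, Fin.ext_iff]
    split_ifs <;> (try simp only [false_or, or_false, true_and, and_true, false_and, and_false, true_or, or_true, not_true, not_false_iff, not_or] at *) <;> first | omega | (push_cast; subst_vars; ring) | exact absurd rfl (by assumption)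
  simp only [Matrix.mulVec, dotProduct, key, Finset.sum_add_distrib,
    Finset.sum_ite_eq', Finset.mem_univ, if_true]
  ring

lemma rowMid (n : ℕ) (hn : 3 ≤ n) (w : Fin n → ℚ) (i : ℕ) (h1 : 0 < i) (h2 : i < n - 1) :
    ((cycMat n).map (Int.cast : ℤ → ℚ)).mulVec w ⟨i, by omega⟩ =
      w ⟨i-1, by omega⟩ - 2 * w ⟨i, by omega⟩ + w ⟨i+1, by omega⟩ := by
  have key : ∀ j : Fin n, ((cycMat n).map (Int.cast : ℤ → ℚ)) ⟨i, by omega⟩ j * w j =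
      (if j = (⟨i-1, by omega⟩ : Fin n) then w ⟨i-1, by omega⟩ else 0)
      + (if j = (⟨i, by omega⟩ : Fin n) then -2 * w ⟨i, by omega⟩ else 0)
      + (if j = (⟨i+1, by omega⟩ : Fin n) then w ⟨i+1, by omega⟩ else 0) := by
    rintro ⟨j, hj⟩
    simp only [cycMat, Matrix.map_apply, Fin.mk.injEq, Fin.ext_iff]
    split_ifs <;> (try simp only [false_or, or_false, true_and, and_true, false_and, and_false, true_or, or_true, not_true, not_false_iff, not_or] at *) <;> first | omega | (push_cast; subst_vars; ring) | exact absurd rfl (by assumption)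
  simp only [Matrix.mulVec, dotProduct, key, Finset.sum_add_distrib,
    Finset.sum_ite_eq', Finset.mem_univ, if_true]
  ring


lemma cyc_inj (n : ℕ) (hn : 3 ≤ n) (w : Fin n → ℚ)
    (hw : ((cycMat n).map (Int.cast : ℤ → ℚ)).mulVec w = 0) : w = 0 := by
  set W : ℕ → ℚ := fun i => if h : i < n then w ⟨i, h⟩ else 0 with hW
  have hWw : ∀ (i : ℕ) (h : i < n), w ⟨i, h⟩ = W i := by
    intro i h; simp [hW, h]
  have h0 : -2 * W 0 + W 1 - W (n-1) = 0 := by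
    have := congrFun hw ⟨0, by omega⟩
    rw [row0 n hn w] at this
    rw [hWw 0 (by omega), hWw 1 (by omega), hWw (n-1) (by omega)] at this
    simpa using this
  have hl : W (n-2) - 2 * W (n-1) - W 0 = 0 := by
    have := congrFun hw ⟨n-1, by omega⟩
    rw [rowLast n hn w] at this
    rw [hWw (n-2) (by omega), hWw (n-1) (by omega), hWw 0 (by omega)] at this
    simpa using this
  have hmid : ∀ i : ℕ, 0 < i → i < n - 1 → W (i-1) - 2 * W i + W (i+1) = 0 := by
    intro i h1 h2
    have := congrFun hw ⟨i, by omega⟩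
    rw [rowMid n hn w i h1 h2] at this
    rw [hWw (i-1) (by omega), hWw i (by omega), hWw (i+1) (by omega)] at this
    simpa using this
  have key : ∀ i : ℕ, i < n → W i = W 0 + i * (W 1 - W 0) := by
    intro i
    induction i using Nat.strong_induction_on with
    | _ i ih =>
      intro h
      match i with
      | 0 => simp
      | 1 => push_cast; ring
      | (k+2) =>
        have h1 : W k = W 0 + k * (W 1 - W 0) := ih k (by omega) (by omega)
        have h2 : W (k+1) = W 0 + (k+1 : ℕ) * (W 1 - W 0) := ih (k+1) (by omega) (by omega)
        have h3 := hmid (k+1) (by omega) (by omega)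
        simp only [Nat.add_sub_cancel] at h3
        push_cast at h1 h2 ⊢
        linarith
  have e1 : -2 * W 0 - ((n:ℚ) - 2) * (W 1 - W 0) = 0 := by
    have := key (n-1) (by omega)
    rw [this] at h0
    have hc : ((n-1 : ℕ) : ℚ) = (n:ℚ) - 1 := by
      push_cast [Nat.cast_sub (by omega : 1 ≤ n)]; ring
    rw [hc] at h0
    linarith
  have e2 : -2 * W 0 - (n:ℚ) * (W 1 - W 0) = 0 := by
    have k1 := key (n-1) (by omega)
    have k2 := key (n-2) (by omega)
    rw [k1, k2] at hl
    have hc1 : ((n-1 : ℕ) : ℚ) = (n:ℚ) - 1 := by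
      push_cast [Nat.cast_sub (by omega : 1 ≤ n)]; ring
    have hc2 : ((n-2 : ℕ) : ℚ) = (n:ℚ) - 2 := by
      push_cast [Nat.cast_sub (by omega : 2 ≤ n)]; ring
    rw [hc1, hc2] at hl
    linarith
  have hd : W 1 - W 0 = 0 := by linarith
  have h00 : W 0 = 0 := by
    rw [hd] at e2; linarith
  funext i
  rcases i with ⟨i, hi⟩
  have := key i hi
  rw [hd, h00] at this
  rw [hWw i hi] at *
  simpa using this

/-- For n ≥ 3 and K₃ = (2,0,…,0)ᵀ, K₃ᵀ Mₙ⁻¹ K₃ = −n over ℚ. -/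
theorem stmt_14 (n : ℕ) (hn : 3 ≤ n) :
    (fun i : Fin n => if (i : ℕ) = 0 then (2 : ℚ) else 0) ⬝ᵥ
        ((cycMat n).map (Int.cast : ℤ → ℚ))⁻¹.mulVec
          (fun i : Fin n => if (i : ℕ) = 0 then (2 : ℚ) else 0) = -(n : ℚ) := by
  haveI : NeZero n := ⟨by omega⟩
  set M := (cycMat n).map (Int.cast : ℤ → ℚ) with hM
  set K : Fin n → ℚ := fun i => if (i : ℕ) = 0 then (2 : ℚ) else 0 with hK
  set v : Fin n → ℚ := fun i => (i : ℚ) - n/2 with hv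
  have hMv : M.mulVec v = K := by
    funext i
    rcases i with ⟨i, hi⟩
    rcases Nat.eq_zero_or_pos i with h0 | h0
    · subst h0
      rw [show (⟨0, hi⟩ : Fin n) = ⟨0, by omega⟩ from rfl, row0 n hn v]
      have hc : ((n-1 : ℕ) : ℚ) = (n:ℚ) - 1 := by
        push_cast [Nat.cast_sub (by omega : 1 ≤ n)]; ring
      simp only [hv, hK]
      norm_num [hc]
      ring
    · rcases Nat.lt_or_ge i (n-1) with h1 | h1
      · rw [show (⟨i, hi⟩ : Fin n) = ⟨i, by omega⟩ from rfl, rowMid n hn v i h0 h1]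
        have hc : ((i-1 : ℕ) : ℚ) = (i:ℚ) - 1 := by
          push_cast [Nat.cast_sub (by omega : 1 ≤ i)]; ring
        simp only [hv, hK]
        norm_num [hc]
        rw [if_neg (by omega : ¬ i = 0)]
        push_cast; ring
      · have hi' : i = n - 1 := by omega
        subst hi'
        rw [show (⟨n-1, hi⟩ : Fin n) = ⟨n-1, by omega⟩ from rfl, rowLast n hn v]
        have hc1 : ((n-1 : ℕ) : ℚ) = (n:ℚ) - 1 := by
          push_cast [Nat.cast_sub (by omega : 1 ≤ n)]; ring
        have hc2 : ((n-2 : ℕ) : ℚ) = (n:ℚ) - 2 := by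
          push_cast [Nat.cast_sub (by omega : 2 ≤ n)]; ring
        simp only [hv, hK]
        norm_num [hc1, hc2]
        rw [if_neg (by omega : ¬ n - 1 = 0)]
        ring
  have hdet : IsUnit M.det := by
    rw [isUnit_iff_ne_zero]
    intro h
    obtain ⟨u, hu0, hu⟩ := Matrix.exists_mulVec_eq_zero_iff.2 h
    exact hu0 (cyc_inj n hn u hu)
  have hinv : M⁻¹.mulVec K = v := by
    rw [← hMv, Matrix.mulVec_mulVec, Matrix.nonsing_inv_mul M hdet, Matrix.one_mulVec]
  rw [hinv]
  have hsum : K ⬝ᵥ v = 2 * v 0 := by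
    rw [dotProduct]
    have : ∀ i : Fin n, K i * v i = if i = (0 : Fin n) then 2 * v 0 else 0 := by
      intro i
      rcases eq_or_ne i 0 with h | h
      · subst h; simp [hK]
      · rw [if_neg h, hK]
        have : (i : ℕ) ≠ 0 := fun hc => h (Fin.ext (by simp [hc]))
        simp [this]
    simp only [this, Finset.sum_ite_eq', Finset.mem_univ, if_true]
  rw [hsum]
  have : v 0 = -(n:ℚ)/2 := by simp [hv]; ring
  rw [this]; ring
end

section
/- Let n ≥ 3 and let Mₙ be the n×n integer matrix with Mᵢᵢ = −2, M_{i,i+1} = M_{i+1,i} = 1 for 1 ≤ i ≤ n−1, M_{1,n} = M_{n,1} = −1, and all other entries 0. Let K₂ = (2, 0, …, 0, 2)ᵀ ∈ ℚⁿ. Then K₂ᵀ Mₙ⁻¹ K₂ = −4. -/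
open Matrix Finset

namespace Stmt15

variable {n : ℕ}

lemma entry_zero (i j : Fin n)
    (h1 : (i:ℕ) ≠ j) (h2 : (i:ℕ)+1 ≠ (j:ℕ)) (h3 : (j:ℕ)+1 ≠ (i:ℕ))
    (h4 : ¬((i:ℕ) = 0 ∧ (j:ℕ) = n-1)) (h5 : ¬((j:ℕ)=0 ∧ (i:ℕ)=n-1)) :
    cycMat n i j = 0 := by
  unfold cycMat
  rw [if_neg, if_neg, if_neg]
  · tauto
  · tauto
  · intro h; exact h1 (congrArg Fin.val h)

lemma sum_three (f : Fin n → ℚ) (a b c : Fin n)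
    (hab : a ≠ b) (hac : a ≠ c) (hbc : b ≠ c)
    (hz : ∀ j, j ≠ a → j ≠ b → j ≠ c → f j = 0) :
    ∑ j, f j = f a + f b + f c := by
  rw [← Finset.sum_subset (Finset.subset_univ ({a, b, c} : Finset (Fin n)))
      (fun j _ hj => by
        simp only [Finset.mem_insert, Finset.mem_singleton, not_or] at hj
        exact hz j hj.1 hj.2.1 hj.2.2)]
  rw [Finset.sum_insert (by simp [hab, hac]), Finset.sum_insert (by simp [hbc]),
    Finset.sum_singleton, add_assoc]

/-- row 0 -/
lemma row_first (hn : 3 ≤ n) (w : Fin n → ℚ) (i : Fin n) (hi : (i:ℕ) = 0) :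
    ∑ j, ((cycMat n i j : ℤ) : ℚ) * w j
      = -2 * w i + w ⟨1, by omega⟩ - w ⟨n-1, by omega⟩ := by
  rw [sum_three _ i ⟨1, by omega⟩ ⟨n-1, by omega⟩
      (by simp [Fin.ext_iff]; try omega) (by simp [Fin.ext_iff]; try omega)
      (by simp [Fin.ext_iff]; try omega)
      (fun j hja hjb hjc => by
        rw [entry_zero i j]
        · simp
        all_goals simp [Fin.ext_iff] at hja hjb hjc ⊢ ; try omega)]
  have e1 : cycMat n i i = -2 := by simp [cycMat]
  have e2 : cycMat n i ⟨1, by omega⟩ = 1 := by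
    simp [cycMat, Fin.ext_iff, hi]
  have e3 : cycMat n i ⟨n-1, by omega⟩ = -1 := by
    simp [cycMat, Fin.ext_iff, hi]
    omega
  rw [e1, e2, e3]; push_cast; ring

/-- row n-1 -/
lemma row_last (hn : 3 ≤ n) (w : Fin n → ℚ) (i : Fin n) (hi : (i:ℕ) = n-1) :
    ∑ j, ((cycMat n i j : ℤ) : ℚ) * w j
      = -(w ⟨0, by omega⟩) + w ⟨n-2, by omega⟩ - 2 * w i := by
  rw [sum_three _ ⟨0, by omega⟩ ⟨n-2, by omega⟩ i
      (by simp [Fin.ext_iff]; try omega) (by simp [Fin.ext_iff]; try omega)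
      (by simp [Fin.ext_iff]; try omega)
      (fun j hja hjb hjc => by
        rw [entry_zero i j]
        · simp
        all_goals (simp [Fin.ext_iff] at hja hjb hjc ⊢; omega))]
  have e1 : cycMat n i ⟨0, by omega⟩ = -1 := by
    simp [cycMat, Fin.ext_iff, hi]; try omega
  have e2 : cycMat n i ⟨n-2, by omega⟩ = 1 := by
    simp [cycMat, Fin.ext_iff, hi]; try omega
  have e3 : cycMat n i i = -2 := by simp [cycMat]
  rw [e1, e2, e3]; push_cast; ring

/-- interior rows -/
lemma row_mid (hn : 3 ≤ n) (w : Fin n → ℚ) (i : Fin n)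
    (h0 : 0 < (i:ℕ)) (h1 : (i:ℕ) < n-1) :
    ∑ j, ((cycMat n i j : ℤ) : ℚ) * w j
      = w ⟨(i:ℕ)-1, by omega⟩ - 2 * w i + w ⟨(i:ℕ)+1, by omega⟩ := by
  rw [sum_three _ ⟨(i:ℕ)-1, by omega⟩ i ⟨(i:ℕ)+1, by omega⟩
      (by simp [Fin.ext_iff]; try omega) (by simp [Fin.ext_iff]; try omega)
      (by simp [Fin.ext_iff]; try omega)
      (fun j hja hjb hjc => by
        rw [entry_zero i j]
        · simp
        all_goals (simp [Fin.ext_iff] at hja hjb hjc ⊢; omega))]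
  have e1 : cycMat n i ⟨(i:ℕ)-1, by omega⟩ = 1 := by
    simp [cycMat, Fin.ext_iff]; try omega
  have e2 : cycMat n i i = -2 := by simp [cycMat]
  have e3 : cycMat n i ⟨(i:ℕ)+1, by omega⟩ = 1 := by
    simp [cycMat, Fin.ext_iff]; try omega
  rw [e1, e2, e3]; push_cast; ring

def K2 (n : ℕ) : Fin n → ℚ := fun i => if (i : ℕ) = 0 ∨ (i : ℕ) = n - 1 then (2 : ℚ) else 0

lemma mulVec_apply (w : Fin n → ℚ) (i : Fin n) :
    ((cycMat n).map (Int.cast : ℤ → ℚ)).mulVec w i = ∑ j, ((cycMat n i j : ℤ) : ℚ) * w j := by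
  simp [Matrix.mulVec, dotProduct, Matrix.map_apply]

lemma mulVec_neg_one (hn : 3 ≤ n) :
    ((cycMat n).map (Int.cast : ℤ → ℚ)).mulVec (fun _ => (-1 : ℚ)) = K2 n := by
  funext i
  rw [mulVec_apply]
  by_cases h0 : (i:ℕ) = 0
  · rw [row_first hn _ i h0]
    simp only [K2]
    rw [if_pos (Or.inl h0)]; norm_num
  · by_cases h1 : (i:ℕ) = n - 1
    · rw [row_last hn _ i h1]
      simp only [K2]
      rw [if_pos (Or.inr h1)]; norm_num
    · have hlt := i.isLt
      rw [row_mid hn _ i (by omega) (by omega)]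
      simp only [K2]
      rw [if_neg (by tauto)]; norm_num

lemma kernel_triv (hn : 3 ≤ n) (v : Fin n → ℚ)
    (hv : ((cycMat n).map (Int.cast : ℤ → ℚ)).mulVec v = 0) : v = 0 := by
  have hrow : ∀ i : Fin n, ∑ j, ((cycMat n i j : ℤ) : ℚ) * v j = 0 := by
    intro i; rw [← mulVec_apply, hv]; rfl
  set u : ℕ → ℚ := fun k => if h : k < n then v ⟨k, h⟩ else 0 with hu
  set d : ℚ := u 1 - u 0 with hd
  have huv : ∀ (k : ℕ) (hk : k < n), u k = v ⟨k, hk⟩ := by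
    intro k hk; simp only [hu]; rw [dif_pos hk]
  have hlin : ∀ k, k ≤ n - 1 → u k = u 0 + k * d := by
    intro k
    induction k using Nat.strong_induction_on with
    | _ k ih =>
      match k with
      | 0 => intro _; simp
      | 1 => intro _; rw [hd]; push_cast; ring
      | (m+2) =>
        intro hk
        have h1 : ∑ j, ((cycMat n ⟨m+1, by omega⟩ j : ℤ) : ℚ) * v j = 0 :=
          hrow ⟨m+1, by omega⟩
        rw [row_mid hn v ⟨m+1, by omega⟩ (by simp) (by simp; omega)] at h1
        have h1' : v ⟨m, by omega⟩ - 2 * v ⟨m+1, by omega⟩ + v ⟨m+2, by omega⟩ = 0 := h1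
        have hm : u m = u 0 + m * d := ih m (by omega) (by omega)
        have hm1 := ih (m+1) (by omega) (by omega)
        push_cast at hm1 ⊢
        rw [huv (m+2) (by omega)]
        rw [huv m (by omega)] at hm
        rw [huv (m+1) (by omega)] at hm1
        push_cast at hm hm1 ⊢
        linarith [h1', hm, hm1]
  have h1 : ∑ j, ((cycMat n ⟨0, by omega⟩ j : ℤ) : ℚ) * v j = 0 := hrow _
  rw [row_first hn v ⟨0, by omega⟩ rfl] at h1
  have h2 : ∑ j, ((cycMat n ⟨n-1, by omega⟩ j : ℤ) : ℚ) * v j = 0 := hrow _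
  rw [row_last hn v ⟨n-1, by omega⟩ rfl] at h2
  have l1 : u (n-1) = u 0 + ((n-1 : ℕ) : ℚ) * d := hlin (n-1) le_rfl
  have l2 : u (n-2) = u 0 + ((n-2 : ℕ) : ℚ) * d := hlin (n-2) (by omega)
  have lu1 : u 1 = u 0 + d := by rw [hd]; ring
  rw [huv (n-1) (by omega)] at l1
  rw [huv (n-2) (by omega)] at l2
  rw [huv 1 (by omega)] at lu1
  have hu0 : u 0 = v ⟨0, by omega⟩ := huv 0 (by omega)
  rw [hu0] at l1 l2 lu1
  have c1 : ((n-1 : ℕ) : ℚ) = (n : ℚ) - 1 := by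
    rw [Nat.cast_sub (by omega)]; norm_num
  have c2 : ((n-2 : ℕ) : ℚ) = (n : ℚ) - 2 := by
    rw [Nat.cast_sub (by omega)]; norm_num
  rw [c1] at l1
  rw [c2] at l2
  -- from h1, h2, l1, l2, lu1 derive d = 0 and v 0 = 0
  have hdz : d = 0 := by nlinarith [h1, h2, l1, l2, lu1]
  have hv0 : v ⟨0, by omega⟩ = 0 := by
    rw [hdz] at l1 lu1
    nlinarith [h1, l1, lu1]
  funext i
  have hvi : v i = u (i:ℕ) := by
    rw [huv (i:ℕ) i.isLt]
  have hle : (i:ℕ) ≤ n - 1 := by have := i.isLt; omega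
  rw [hvi, hlin (i:ℕ) hle, hdz, hu0, hv0]
  simp

lemma det_ne (hn : 3 ≤ n) : ((cycMat n).map (Int.cast : ℤ → ℚ)).det ≠ 0 := by
  intro h
  obtain ⟨v, hv0, hv⟩ := (Matrix.exists_mulVec_eq_zero_iff).mpr h
  exact hv0 (kernel_triv hn v hv)

end Stmt15

/-- For n ≥ 3 and K₂ = (2,0,…,0,2)ᵀ, K₂ᵀ Mₙ⁻¹ K₂ = −4 over ℚ. -/
theorem stmt_15 (n : ℕ) (hn : 3 ≤ n) :
    (fun i : Fin n => if (i : ℕ) = 0 ∨ (i : ℕ) = n - 1 then (2 : ℚ) else 0) ⬝ᵥ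
        ((cycMat n).map (Int.cast : ℤ → ℚ))⁻¹.mulVec
          (fun i : Fin n => if (i : ℕ) = 0 ∨ (i : ℕ) = n - 1 then (2 : ℚ) else 0) = -4 := by
  have hdet := Stmt15.det_ne hn
  have hB := Stmt15.mulVec_neg_one hn
  have hinv : ((cycMat n).map (Int.cast : ℤ → ℚ))⁻¹.mulVec (Stmt15.K2 n)
      = fun _ => (-1 : ℚ) := by
    rw [← hB, Matrix.mulVec_mulVec,
      Matrix.nonsing_inv_mul _ (isUnit_iff_ne_zero.mpr hdet), Matrix.one_mulVec]
  show (Stmt15.K2 n) ⬝ᵥ ((cycMat n).map (Int.cast : ℤ → ℚ))⁻¹.mulVec (Stmt15.K2 n) = -4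
  rw [hinv]
  have key : ∀ j : Fin n, j ≠ ⟨0, by omega⟩ → j ≠ ⟨n-1, by omega⟩ →
      Stmt15.K2 n j * (-1) = 0 := by
    intro j hj0 hj1
    have h0 : (j:ℕ) ≠ 0 := fun h => hj0 (Fin.ext h)
    have h1 : (j:ℕ) ≠ n-1 := fun h => hj1 (Fin.ext h)
    simp only [Stmt15.K2]
    rw [if_neg (by tauto)]; ring
  show ∑ j, Stmt15.K2 n j * (-1) = -4
  rw [← Finset.sum_subset
      (Finset.subset_univ ({⟨0, by omega⟩, ⟨n-1, by omega⟩} : Finset (Fin n)))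
      (fun j _ hj => by
        simp only [Finset.mem_insert, Finset.mem_singleton, not_or] at hj
        exact key j hj.1 hj.2)]
  rw [Finset.sum_insert (by simp [Fin.ext_iff]; omega), Finset.sum_singleton]
  simp only [Stmt15.K2]
  rw [if_pos (by simp), if_pos (by simp)]
  norm_num
end
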